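/- arXiv:1102.4859 — 3 statements merged into one kernel-verified Lean document; each statement's English description precedes it below -/
import Mathlib

section
/- If p ∈ M^ν_{d+1,d}(q), i.e., p = Σ_j g_j* g_j + Σ_j f_j* q f_j with matrix-valued noncommutative polynomials g_j of degree at most d+1 and f_j of degree at most d, where q is a monic linear pencil, and deg(p) ≤ 2d+1, then each g_j has degree at most d; consequently p ∈ M^ν_{d,d}(q). -/
open scoped Matrix BigOperators
noncomputable section

/-- Free noncommutative polynomials in `g` symmetric variables with real coefficients. -/
abbrev NCPoly (g : ℕ) := MonoidAlgebra ℝ (FreeMonoid (Fin g))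

namespace NCPoly

variable {g : ℕ}

/-- Reverse a word (the involution on the free monoid). -/
def wordStar (w : FreeMonoid (Fin g)) : FreeMonoid (Fin g) :=
  FreeMonoid.ofList (FreeMonoid.toList w).reverse

/-- The involution `*` on `ℝ⟨x⟩`, fixing the variables and reversing words. -/
def adj (p : NCPoly g) : NCPoly g := MonoidAlgebra.ofCoeff (Finsupp.mapDomain wordStar p.coeff)

/-- Degree of a noncommutative polynomial. -/
def deg (p : NCPoly g) : ℕ := p.coeff.support.sup fun w => (FreeMonoid.toList w).length

/-- The variable `x_i`. -/
def X (i : Fin g) : NCPoly g := MonoidAlgebra.single (FreeMonoid.of i) 1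

/-- Evaluation of `p` at a `g`-tuple of `n × n` real matrices. -/
def eval {n : ℕ} (X : Fin g → Matrix (Fin n) (Fin n) ℝ) (p : NCPoly g) :
    Matrix (Fin n) (Fin n) ℝ :=
  (MonoidAlgebra.lift ℝ (Matrix (Fin n) (Fin n) ℝ) (FreeMonoid (Fin g)))
    (FreeMonoid.lift X) p

/-- `p` is homogeneous of degree `m`. -/
def Homog (m : ℕ) (p : NCPoly g) : Prop :=
  ∀ w ∈ p.coeff.support, (FreeMonoid.toList w).length = m

end NCPoly

/-- Matrix-valued noncommutative polynomials. -/
abbrev MatPoly (g : ℕ) (I J : Type*) := Matrix I J (NCPoly g)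

namespace MatPoly

variable {g : ℕ}

/-- The involution on matrix polynomials: transpose and star entrywise. -/
def adj {I J : Type*} (P : MatPoly g I J) : MatPoly g J I := fun i j => NCPoly.adj (P j i)

/-- Degree of a matrix polynomial. -/
def deg {I J : Type*} [Fintype I] [Fintype J] (P : MatPoly g I J) : ℕ :=
  Finset.univ.sup fun p : I × J => NCPoly.deg (P p.1 p.2)

/-- Entrywise (Kronecker) evaluation at a tuple of symmetric `n × n` matrices. -/
def eval {I J : Type*} {n : ℕ} (X : Fin g → Matrix (Fin n) (Fin n) ℝ)
    (P : MatPoly g I J) : Matrix (I × Fin n) (J × Fin n) ℝ :=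
  fun ik jl => NCPoly.eval X (P ik.1 jl.1) ik.2 jl.2

/-- `P` is symmetric: `P* = P`. -/
def IsSymmP {I : Type*} (P : MatPoly g I I) : Prop := adj P = P

/-- The monic linear pencil `I - Σ A_j x_j`. -/
def pencil {ℓ : ℕ} (A : Fin g → Matrix (Fin ℓ) (Fin ℓ) ℝ) : MatPoly g (Fin ℓ) (Fin ℓ) :=
  (1 : Matrix (Fin ℓ) (Fin ℓ) (NCPoly g)) -
    ∑ j : Fin g, (A j).map (fun c => MonoidAlgebra.single (FreeMonoid.of j) c)

/-- A tuple of matrices is symmetric. -/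
def SymTuple {n : ℕ} (X : Fin g → Matrix (Fin n) (Fin n) ℝ) : Prop := ∀ j, (X j).IsSymm

/-- Membership in the nc semialgebraic set `𝔓_q` at level `n`. -/
def InP {I : Type*} [Fintype I] (q : MatPoly g I I) {n : ℕ}
    (X : Fin g → Matrix (Fin n) (Fin n) ℝ) : Prop :=
  SymTuple X ∧ (eval X q).PosSemidef

/-- `p` is a sum of hermitian squares of degree at most `α`. -/
def InSigma {ν : ℕ} (α : ℕ) (p : MatPoly g (Fin ν) (Fin ν)) : Prop :=
  ∃ (m : ℕ) (v : Fin m → Fin ν → NCPoly g),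
    (∀ k i, NCPoly.deg (v k i) ≤ α) ∧
    p = fun i j => ∑ k, NCPoly.adj (v k i) * v k j

/-- Membership in the truncated quadratic module `M^ν_{α,β}(q)`. -/
def InM {ℓ ν : ℕ} (α β : ℕ) (q : MatPoly g (Fin ℓ) (Fin ℓ))
    (p : MatPoly g (Fin ν) (Fin ν)) : Prop :=
  ∃ (σ : MatPoly g (Fin ν) (Fin ν)) (m : ℕ)
    (f : Fin m → MatPoly g (Fin ℓ) (Fin ν)),
    InSigma α σ ∧ (∀ k, deg (f k) ≤ β) ∧
    p = σ + ∑ k, adj (f k) * q * f k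

end MatPoly

/-- `σ_#(k) = dim ℝ⟨x⟩_k`. -/
def sigmaSharp (g k : ℕ) : ℕ := ∑ j ∈ Finset.range (k + 1), g ^ j


namespace NCPoly

variable {g : ℕ}

lemma length_wordStar (w : FreeMonoid (Fin g)) :
    (FreeMonoid.toList (wordStar w)).length = (FreeMonoid.toList w).length := by
  simp [wordStar]

lemma wordStar_wordStar (w : FreeMonoid (Fin g)) : wordStar (wordStar w) = w := by
  simp [wordStar]

lemma wordStar_injective : Function.Injective (wordStar (g := g)) :=
  Function.Involutive.injective wordStar_wordStar

lemma adj_apply (p : NCPoly g) (w : FreeMonoid (Fin g)) : (adj p).coeff w = p.coeff (wordStar w) := by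
  have h := Finsupp.mapDomain_apply wordStar_injective p.coeff (wordStar w)
  rw [wordStar_wordStar] at h
  simpa [adj] using h

lemma apply_eq_zero_of_deg_lt {p : NCPoly g} {w : FreeMonoid (Fin g)}
    (h : deg p < (FreeMonoid.toList w).length) : p.coeff w = 0 := by
  by_contra hne
  exact absurd (Finset.le_sup (f := fun w => (FreeMonoid.toList w).length)
    (Finsupp.mem_support_iff.mpr hne)) (not_le.mpr h)

lemma deg_adj_le (p : NCPoly g) : deg (adj p) ≤ deg p := by
  classical
  apply Finset.sup_le
  intro w hw
  obtain ⟨u, hu, rfl⟩ := Finset.mem_image.mp (Finsupp.mapDomain_support hw)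
  rw [length_wordStar]
  exact Finset.le_sup hu

lemma deg_mul_le (p q : NCPoly g) : deg (p * q) ≤ deg p + deg q := by
  classical
  apply Finset.sup_le
  intro w hw
  obtain ⟨u, hu, x, hx, rfl⟩ := Finset.mem_mul.mp (MonoidAlgebra.support_coeff_mul_subset p q hw)
  rw [FreeMonoid.toList_mul, List.length_append]
  exact add_le_add (Finset.le_sup hu) (Finset.le_sup hx)

lemma deg_zero : deg (0 : NCPoly g) = 0 := by simp [deg]

lemma deg_add_le (p q : NCPoly g) : deg (p + q) ≤ max (deg p) (deg q) := by
  classical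
  apply Finset.sup_le
  intro w hw
  rcases Finset.mem_union.mp (Finsupp.support_add hw) with h | h
  · exact le_max_of_le_left (Finset.le_sup h)
  · exact le_max_of_le_right (Finset.le_sup h)

lemma deg_neg (p : NCPoly g) : deg (-p) = deg p := by
  unfold deg
  rw [MonoidAlgebra.coeff_neg, Finsupp.support_neg]

lemma deg_single_le (u : FreeMonoid (Fin g)) (c : ℝ) :
    deg (MonoidAlgebra.single u c : NCPoly g) ≤ (FreeMonoid.toList u).length := by
  apply Finset.sup_le
  intro w hw
  have := Finsupp.support_single_subset hw
  rw [Finset.mem_singleton] at this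
  subst this
  exact le_rfl

lemma deg_finset_sum_le {ι : Type*} (s : Finset ι) (f : ι → NCPoly g) (n : ℕ)
    (h : ∀ i ∈ s, deg (f i) ≤ n) : deg (∑ i ∈ s, f i) ≤ n := by
  classical
  refine Finset.sum_induction f (fun x => deg x ≤ n) ?_ ?_ h
  · intro x y hx hy
    exact le_trans (deg_add_le x y) (max_le hx hy)
  · show deg (0 : NCPoly g) ≤ n
    rw [deg_zero]; exact Nat.zero_le n

lemma mul_apply_top (a b : NCPoly g) {D E : ℕ} (ha : deg a ≤ D) (hb : deg b ≤ E)
    (w1 w2 : FreeMonoid (Fin g)) (h1 : (FreeMonoid.toList w1).length = D)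
    (h2 : (FreeMonoid.toList w2).length = E) :
    (a * b).coeff (w1 * w2) = a.coeff w1 * b.coeff w2 := by
  classical
  have key : ∀ u ∈ a.coeff.support, ∀ x ∈ b.coeff.support, u * x = w1 * w2 → u = w1 ∧ x = w2 := by
    intro u hu x hx hux
    have hul : (FreeMonoid.toList u).length ≤ D := le_trans (Finset.le_sup hu) ha
    have hxl : (FreeMonoid.toList x).length ≤ E := le_trans (Finset.le_sup hx) hb
    have hlist : FreeMonoid.toList u ++ FreeMonoid.toList x
        = FreeMonoid.toList w1 ++ FreeMonoid.toList w2 := by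
      have := congrArg FreeMonoid.toList hux
      simpa [FreeMonoid.toList_mul] using this
    have hlen : (FreeMonoid.toList u).length = (FreeMonoid.toList w1).length := by
      have hl := congrArg List.length hlist
      simp only [List.length_append] at hl
      omega
    obtain ⟨e1, e2⟩ := List.append_inj hlist hlen
    exact ⟨FreeMonoid.toList.injective e1, FreeMonoid.toList.injective e2⟩
  rw [MonoidAlgebra.coeff_mul, Finsupp.sum]
  have step1 : ∀ u ∈ a.coeff.support,
      (Finsupp.sum b.coeff fun a₂ b₂ => if u * a₂ = w1 * w2 then a.coeff u * b₂ else 0)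
        = if u = w1 then (if w2 ∈ b.coeff.support then a.coeff w1 * b.coeff w2 else 0) else 0 := by
    intro u hu
    rw [Finsupp.sum]
    by_cases hu1 : u = w1
    · have hu' : w1 ∈ a.coeff.support := hu1 ▸ hu
      rw [if_pos hu1, hu1]
      calc (∑ x ∈ b.coeff.support, if w1 * x = w1 * w2 then a.coeff w1 * b.coeff x else 0)
          = ∑ x ∈ b.coeff.support, if x = w2 then a.coeff w1 * b.coeff x else 0 := by
            apply Finset.sum_congr rfl
            intro x hx
            by_cases hx2 : x = w2
            · subst hx2; simp
            · rw [if_neg hx2, if_neg]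
              intro h
              exact hx2 (key _ hu' _ hx h).2
        _ = if w2 ∈ b.coeff.support then a.coeff w1 * b.coeff w2 else 0 :=
            Finset.sum_ite_eq' b.coeff.support w2 _
    · rw [if_neg hu1]
      apply Finset.sum_eq_zero
      intro x hx
      rw [if_neg]
      intro h
      exact hu1 (key _ hu _ hx h).1
  rw [Finset.sum_congr rfl step1,
    Finset.sum_ite_eq' a.coeff.support w1 (fun _ => if w2 ∈ b.coeff.support then a.coeff w1 * b.coeff w2 else 0)]
  by_cases ha1 : w1 ∈ a.coeff.support
  · by_cases hb2 : w2 ∈ b.coeff.support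
    · rw [if_pos ha1, if_pos hb2]
    · rw [if_pos ha1, if_neg hb2, Finsupp.notMem_support_iff.mp hb2, mul_zero]
  · rw [if_neg ha1, Finsupp.notMem_support_iff.mp ha1, zero_mul]

end NCPoly

lemma MatPoly.entry_deg_le {g : ℕ} {I J : Type*} [Fintype I] [Fintype J]
    (P : MatPoly g I J) (i : I) (j : J) : NCPoly.deg (P i j) ≤ MatPoly.deg P :=
  Finset.le_sup (f := fun pr : I × J => NCPoly.deg (P pr.1 pr.2)) (Finset.mem_univ (i, j))

lemma deg_pencil_le {g ℓ : ℕ} (A : Fin g → Matrix (Fin ℓ) (Fin ℓ) ℝ) (a b : Fin ℓ) :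
    NCPoly.deg (MatPoly.pencil A a b) ≤ 1 := by
  rw [MatPoly.pencil, Matrix.sub_apply, sub_eq_add_neg]
  refine le_trans (NCPoly.deg_add_le _ _) (max_le ?_ ?_)
  · rw [Matrix.one_apply]
    split_ifs
    · rw [MonoidAlgebra.one_def]
      refine le_trans (NCPoly.deg_single_le _ _) ?_
      rw [FreeMonoid.toList_one]
      exact Nat.zero_le 1
    · rw [NCPoly.deg_zero]; exact Nat.zero_le 1
  · rw [NCPoly.deg_neg, Matrix.sum_apply]
    apply NCPoly.deg_finset_sum_le
    intro j _
    rw [Matrix.map_apply]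
    refine le_trans (NCPoly.deg_single_le _ _) ?_
    rw [FreeMonoid.toList_of]
    exact le_rfl

lemma deg_fqf_le {g ℓ ν d : ℕ} (A : Fin g → Matrix (Fin ℓ) (Fin ℓ) ℝ)
    (F : MatPoly g (Fin ℓ) (Fin ν)) (hF : MatPoly.deg F ≤ d) (i i' : Fin ν) :
    NCPoly.deg ((MatPoly.adj F * MatPoly.pencil A * F) i i') ≤ 2 * d + 1 := by
  rw [Matrix.mul_apply]
  apply NCPoly.deg_finset_sum_le
  intro a _
  refine le_trans (NCPoly.deg_mul_le _ _) ?_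
  have h2 : NCPoly.deg ((MatPoly.adj F * MatPoly.pencil A) i a) ≤ d + 1 := by
    rw [Matrix.mul_apply]
    apply NCPoly.deg_finset_sum_le
    intro b _
    refine le_trans (NCPoly.deg_mul_le _ _) ?_
    have hb : NCPoly.deg (MatPoly.adj F i b) ≤ d := by
      refine le_trans (NCPoly.deg_adj_le (F b i)) ?_
      exact le_trans (MatPoly.entry_deg_le F b i) hF
    have hp := deg_pencil_le A b a
    omega
  have hfa : NCPoly.deg (F a i') ≤ d :=
    le_trans (MatPoly.entry_deg_le F a i') hF
  omega

/-- degree drop in a weighted SOS representation over a monic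
linear pencil: if `deg p ≤ 2d+1`, each square in an `M_{d+1,d}` certificate has
degree at most `d`, so `p ∈ M_{d,d}(q)`. -/
theorem stmt0 {g ℓ ν d : ℕ} (A : Fin g → Matrix (Fin ℓ) (Fin ℓ) ℝ)
    (hA : ∀ j, (A j).IsSymm)
    (p : MatPoly g (Fin ν) (Fin ν)) (hpdeg : MatPoly.deg p ≤ 2 * d + 1)
    (m m' : ℕ) (v : Fin m → Fin ν → NCPoly g)
    (f : Fin m' → MatPoly g (Fin ℓ) (Fin ν))
    (hv : ∀ k i, NCPoly.deg (v k i) ≤ d + 1)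
    (hf : ∀ k, MatPoly.deg (f k) ≤ d)
    (hrep : p = (Matrix.of fun i j => ∑ k, NCPoly.adj (v k i) * v k j) +
      ∑ k, MatPoly.adj (f k) * MatPoly.pencil A * f k) :
    (∀ k i, NCPoly.deg (v k i) ≤ d) ∧
      MatPoly.InM d d (MatPoly.pencil A) p := by
  have hdegv : ∀ k i, NCPoly.deg (v k i) ≤ d := by
    intro k0 i
    apply Finset.sup_le
    intro w hw
    by_contra hlen
    push_neg at hlen
    have hle : (FreeMonoid.toList w).length ≤ d + 1 :=
      le_trans (Finset.le_sup hw) (hv k0 i)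
    have hlen' : (FreeMonoid.toList w).length = d + 1 := le_antisymm hle hlen
    set W : FreeMonoid (Fin g) := NCPoly.wordStar w * w with hW
    have hWlen : (FreeMonoid.toList W).length = 2 * d + 2 := by
      rw [hW, FreeMonoid.toList_mul, List.length_append, NCPoly.length_wordStar, hlen']
      omega
    have hpW : (p i i).coeff W = 0 := by
      apply NCPoly.apply_eq_zero_of_deg_lt
      have h1 : NCPoly.deg (p i i) ≤ 2 * d + 1 :=
        le_trans (MatPoly.entry_deg_le p i i) hpdeg
      omega
    rw [hrep] at hpW
    rw [Matrix.add_apply, Matrix.of_apply, Matrix.sum_apply, MonoidAlgebra.coeff_add, Finsupp.add_apply,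
      MonoidAlgebra.coeff_sum, MonoidAlgebra.coeff_sum,
      Finsupp.finset_sum_apply, Finsupp.finset_sum_apply] at hpW
    have hterm : ∀ k : Fin m, ((NCPoly.adj (v k i) * v k i).coeff W) = (v k i).coeff w * (v k i).coeff w := by
      intro k
      rw [hW, NCPoly.mul_apply_top (NCPoly.adj (v k i)) (v k i)
        (le_trans (NCPoly.deg_adj_le _) (hv k i)) (hv k i) _ _
        (by rw [NCPoly.length_wordStar, hlen']) hlen',
        NCPoly.adj_apply, NCPoly.wordStar_wordStar]
    have hfzero : ∀ k : Fin m',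
        ((MatPoly.adj (f k) * MatPoly.pencil A * f k) i i).coeff W = 0 := by
      intro k
      apply NCPoly.apply_eq_zero_of_deg_lt
      have := deg_fqf_le A (f k) (hf k) i i
      omega
    rw [Finset.sum_congr rfl (fun k _ => hterm k),
      Finset.sum_congr rfl (fun k _ => hfzero k), Finset.sum_const_zero, add_zero] at hpW
    have hall := (Finset.sum_eq_zero_iff_of_nonneg
      (fun k _ => mul_self_nonneg ((v k i).coeff w))).mp hpW k0 (Finset.mem_univ k0)
    exact (Finsupp.mem_support_iff.mp hw) (mul_self_eq_zero.mp hall)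
  refine ⟨hdegv, Matrix.of fun i j => ∑ k, NCPoly.adj (v k i) * v k j, m', f,
    ⟨m, v, hdegv, rfl⟩, hf, hrep⟩
end
end

section
/- There exists a monic linear pencil L such that span{I, A_1, …, A_g} admits a representation I = Σ_j W_j* L(x) W_j if and only if there exist nonzero vectors h_k with Σ_k ⟨A_j h_k, h_k⟩ = 0 for each j; and this happens if and only if span{A_1,…,A_g} contains no positive definite matrix. -/
open scoped Matrix BigOperators
noncomputable section

/-- The constant embedding of a real matrix into matrix polynomials. -/
def constM {g : ℕ} {I J : Type*} (W : Matrix I J ℝ) : MatPoly g I J :=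
  W.map (algebraMap ℝ (NCPoly g))


section AuxStmt15
open Matrix
open scoped Classical

lemma filter_nonzero {ℓ : ℕ} {ι : Type*} [Fintype ι] [DecidableEq ι] (h : ι → Fin ℓ → ℝ)
    (hne : ∃ i, h i ≠ 0) :
    ∃ (m : ℕ) (h' : Fin m → Fin ℓ → ℝ), 0 < m ∧ (∀ k, h' k ≠ 0) ∧
      ∀ A : Matrix (Fin ℓ) (Fin ℓ) ℝ,
        (∑ k, A.mulVec (h' k) ⬝ᵥ h' k) = ∑ i, A.mulVec (h i) ⬝ᵥ h i := by
  classical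
  set S : Finset ι := Finset.univ.filter (fun i => h i ≠ 0) with hS
  obtain ⟨i0, hi0⟩ := hne
  have hScard : 0 < S.card := Finset.card_pos.2 ⟨i0, by simp [hS, hi0]⟩
  refine ⟨S.card, fun k => h (S.equivFin.symm k), hScard, fun k => ?_, fun A => ?_⟩
  · have := (S.equivFin.symm k).2
    simp only [hS, Finset.mem_filter] at this
    exact this.2
  · rw [Equiv.sum_comp S.equivFin.symm (fun x : S => A.mulVec (h x) ⬝ᵥ h x)]
    rw [Finset.sum_coe_sort S (fun i => A.mulVec (h i) ⬝ᵥ h i)]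
    refine Finset.sum_subset (Finset.subset_univ S) ?_
    intro i _ hiS
    have : h i = 0 := by
      by_contra hc
      exact hiS (by simp [hS, hc])
    simp [this]


lemma algMap_eq {g : ℕ} (c : ℝ) :
    algebraMap ℝ (NCPoly g) c = MonoidAlgebra.single 1 c := by
  simp [MonoidAlgebra.coe_algebraMap]

lemma single_sum' {g : ℕ} {ι : Type*} (s : Finset ι) (w : FreeMonoid (Fin g)) (f : ι → ℝ) :
    MonoidAlgebra.single (R := ℝ) w (∑ x ∈ s, f x) = ∑ x ∈ s, MonoidAlgebra.single (R := ℝ) w (f x) :=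
  map_sum (MonoidAlgebra.singleAddHom w) f s

lemma constM_mul_map_mul_constM {g : ℕ} {K I J : Type*} [Fintype K]
    (B : Matrix I K ℝ) (M : Matrix K K ℝ) (C : Matrix K J ℝ) (w : FreeMonoid (Fin g)) :
    (constM B : MatPoly g I K) * (M.map (fun c => MonoidAlgebra.single w c) : MatPoly g K K)
      * (constM C : MatPoly g K J)
      = (B * M * C).map (fun c => MonoidAlgebra.single (R := ℝ) w c) := by
  refine Matrix.ext fun i j => ?_
  simp only [constM, Matrix.mul_apply, Matrix.map_apply, algMap_eq,
    single_sum', Finset.sum_mul, Finset.mul_sum]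
  refine Finset.sum_congr rfl fun k' _ => Finset.sum_congr rfl fun k _ => ?_
  rw [MonoidAlgebra.single_mul_single, MonoidAlgebra.single_mul_single, one_mul, mul_one]

/-- entrywise single as an AddMonoidHom on matrices -/
def mapSingle {g : ℕ} {I J : Type*} (w : FreeMonoid (Fin g)) :
    Matrix I J ℝ →+ MatPoly g I J :=
  AddMonoidHom.mapMatrix (MonoidAlgebra.singleAddHom w)

lemma mapSingle_apply {g : ℕ} {I J : Type*} (w : FreeMonoid (Fin g)) (B : Matrix I J ℝ) :
    mapSingle w B = B.map (fun c => MonoidAlgebra.single w c) := rfl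

lemma sum_conj_pencil {g ℓ m ℓ' : ℕ} (A : Fin g → Matrix (Fin ℓ) (Fin ℓ) ℝ)
    (W : Fin m → Matrix (Fin ℓ) (Fin ℓ') ℝ) :
    ∑ k, (constM (W k)ᵀ * MatPoly.pencil A : MatPoly g (Fin ℓ') (Fin ℓ)) * constM (W k)
      = mapSingle 1 (∑ k, (W k)ᵀ * W k)
        - ∑ j, mapSingle (FreeMonoid.of j) (∑ k, (W k)ᵀ * A j * W k) := by
  have h1 : (1 : Matrix (Fin ℓ) (Fin ℓ) (NCPoly g))
      = (1 : Matrix (Fin ℓ) (Fin ℓ) ℝ).map (fun c => MonoidAlgebra.single 1 c) := by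
    refine (Matrix.map_one _ ?_ ?_).symm
    · exact MonoidAlgebra.single_zero 1
    · exact (MonoidAlgebra.one_def).symm
  have key : ∀ k, (constM (W k)ᵀ : MatPoly g (Fin ℓ') (Fin ℓ)) * MatPoly.pencil A
      * (constM (W k) : MatPoly g (Fin ℓ) (Fin ℓ'))
      = mapSingle 1 ((W k)ᵀ * W k)
        - ∑ j, mapSingle (FreeMonoid.of j) ((W k)ᵀ * A j * W k) := by
    intro k
    rw [MatPoly.pencil, h1, Matrix.mul_sub, Matrix.sub_mul, Matrix.mul_sum, Matrix.sum_mul]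
    rw [constM_mul_map_mul_constM]
    congr 1
    · rw [mapSingle_apply, Matrix.mul_one]
    · refine Finset.sum_congr rfl fun j _ => ?_
      rw [constM_mul_map_mul_constM, mapSingle_apply]
  show ∑ k, (constM (W k)ᵀ : MatPoly g (Fin ℓ') (Fin ℓ)) * MatPoly.pencil A
      * (constM (W k) : MatPoly g (Fin ℓ) (Fin ℓ')) = _
  simp only [key, map_sum, Finset.sum_sub_distrib]
  congr 1
  exact Finset.sum_comm

/-- coefficient of a word, as an AddMonoidHom -/
def coeff {g : ℕ} (w : FreeMonoid (Fin g)) : NCPoly g →+ ℝ :=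
  (Finsupp.applyAddHom w).comp MonoidAlgebra.coeffAddEquiv.toAddMonoidHom

lemma coeff_single {g : ℕ} (w w' : FreeMonoid (Fin g)) (c : ℝ) :
    coeff w (MonoidAlgebra.single w' c) = if w' = w then c else 0 := Finsupp.single_apply

lemma coeff_one {g : ℕ} (w : FreeMonoid (Fin g)) :
    coeff w (1 : NCPoly g) = if 1 = w then 1 else 0 := by
  rw [MonoidAlgebra.one_def, coeff_single]

lemma pencil_extract {g ℓ' : ℕ} (S0 : Matrix (Fin ℓ') (Fin ℓ') ℝ)
    (Sj : Fin g → Matrix (Fin ℓ') (Fin ℓ') ℝ)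
    (hEq : (1 : MatPoly g (Fin ℓ') (Fin ℓ'))
      = mapSingle 1 S0 - ∑ j, mapSingle (FreeMonoid.of j) (Sj j)) :
    S0 = 1 ∧ ∀ j, Sj j = 0 := by
  have key : ∀ (w : FreeMonoid (Fin g)) (b b' : Fin ℓ'),
      coeff w ((1 : MatPoly g (Fin ℓ') (Fin ℓ')) b b')
        = (if (1 : FreeMonoid (Fin g)) = w then S0 b b' else 0)
          - ∑ j, if FreeMonoid.of j = w then Sj j b b' else 0 := by
    intro w b b'
    have e := congrFun (congrFun hEq b) b'
    have e1 := congrArg (coeff w) e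
    rw [Matrix.sub_apply, Matrix.sum_apply, map_sub, map_sum] at e1
    simp only [mapSingle_apply, Matrix.map_apply, coeff_single] at e1
    exact e1
  constructor
  · refine Matrix.ext fun b b' => ?_
    have hthis := key 1 b b'
    have hz : ∀ j : Fin g, (if FreeMonoid.of j = (1 : FreeMonoid (Fin g)) then Sj j b b' else 0) = 0 := by
      intro j
      exact if_neg (by simp)
    rw [if_pos rfl, Finset.sum_eq_zero (fun j _ => hz j), sub_zero] at hthis
    have this := hthis
    rw [← this]
    by_cases hbb : b = b'
    · subst hbb; rw [Matrix.one_apply_eq, Matrix.one_apply_eq, coeff_one, if_pos rfl]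
    · rw [Matrix.one_apply_ne hbb, Matrix.one_apply_ne hbb, map_zero]
  · intro j
    refine Matrix.ext fun b b' => ?_
    have := key (FreeMonoid.of j) b b'
    have hone : coeff (FreeMonoid.of j) ((1 : MatPoly g (Fin ℓ') (Fin ℓ')) b b') = 0 := by
      by_cases hbb : b = b'
      · subst hbb; rw [Matrix.one_apply_eq, coeff_one, if_neg (by simp)]
      · rw [Matrix.one_apply_ne hbb, map_zero]
    rw [hone, if_neg (by simp), zero_sub] at this
    have hsum : ∑ j' : Fin g, (if FreeMonoid.of j' = FreeMonoid.of j then Sj j' b b' else 0)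
        = Sj j b b' := by
      rw [Finset.sum_eq_single j]
      · rw [if_pos rfl]
      · intro j' _ hj'
        rw [if_neg (fun hc => hj' (FreeMonoid.of_injective hc))]
      · intro hj; exact absurd (Finset.mem_univ j) hj
    rw [hsum] at this
    have := neg_eq_zero.mp this.symm
    simp [Matrix.zero_apply, this]

lemma conj_entry {ℓ ℓ' : ℕ} (M : Matrix (Fin ℓ) (Fin ℓ) ℝ) (W : Matrix (Fin ℓ) (Fin ℓ') ℝ)
    (b b' : Fin ℓ') :
    (Wᵀ * M * W) b b' = ∑ i, ∑ i', W i b * M i i' * W i' b' := by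
  simp only [Matrix.mul_apply, Matrix.transpose_apply, Finset.sum_mul, Finset.mul_sum]
  rw [Finset.sum_comm]

lemma conj_diag {ℓ ℓ' : ℕ} (M : Matrix (Fin ℓ) (Fin ℓ) ℝ) (W : Matrix (Fin ℓ) (Fin ℓ') ℝ)
    (b : Fin ℓ') :
    (Wᵀ * M * W) b b = M.mulVec (fun i => W i b) ⬝ᵥ (fun i => W i b) := by
  rw [conj_entry]
  simp only [Matrix.mulVec, dotProduct, Finset.sum_mul]
  refine Finset.sum_congr rfl fun i _ => Finset.sum_congr rfl fun i' _ => ?_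
  ring

lemma conj_rank_one {ℓ ℓ' m : ℕ} (h : Fin m → Fin ℓ → ℝ) (s : ℝ)
    (M : Matrix (Fin ℓ) (Fin ℓ) ℝ) :
    (∑ p : Fin m × Fin ℓ',
      (Matrix.of (fun i b => if b = p.2 then h p.1 i / s else 0) : Matrix (Fin ℓ) (Fin ℓ') ℝ)ᵀ
        * M * Matrix.of (fun i b => if b = p.2 then h p.1 i / s else 0))
      = ((∑ k, M.mulVec (h k) ⬝ᵥ h k) / (s * s)) • (1 : Matrix (Fin ℓ') (Fin ℓ') ℝ) := by
  refine Matrix.ext fun b b' => ?_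
  rw [Matrix.sum_apply]
  simp only [conj_entry, Matrix.of_apply]
  have step : ∀ p : Fin m × Fin ℓ',
      (∑ i, ∑ i', (if b = p.2 then h p.1 i / s else 0) * M i i' * (if b' = p.2 then h p.1 i' / s else 0))
        = if p.2 = b ∧ p.2 = b' then (∑ i, ∑ i', h p.1 i * M i i' * h p.1 i') / (s * s) else 0 := by
    intro p
    by_cases h1 : b = p.2
    · by_cases h2 : b' = p.2
      · rw [if_pos ⟨h1.symm, h2.symm⟩]
        simp only [if_pos h1, if_pos h2, Finset.sum_div]
        refine Finset.sum_congr rfl fun i _ => Finset.sum_congr rfl fun i' _ => ?_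
        ring
      · rw [if_neg (fun hc => h2 hc.2.symm)]
        simp [if_neg h2]
    · rw [if_neg (fun hc => h1 hc.1.symm)]
      simp [if_neg h1]
  rw [Finset.sum_congr rfl (fun p _ => step p)]
  rw [Fintype.sum_prod_type]
  have inner : ∀ C : ℝ, (∑ a : Fin ℓ', if a = b ∧ a = b' then C else 0)
      = if b = b' then C else 0 := by
    intro C
    rw [Finset.sum_eq_single b]
    · by_cases hbb : b = b'
      · rw [if_pos ⟨rfl, hbb⟩, if_pos hbb]
      · rw [if_neg (fun hc => hbb hc.2), if_neg hbb]
    · intro a _ ha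
      rw [if_neg (fun hc => ha hc.1)]
    · intro hb; exact absurd (Finset.mem_univ b) hb
  dsimp only
  rw [Finset.sum_congr rfl (fun k (_ : k ∈ Finset.univ) => inner _)]
  by_cases hbb : b = b'
  · subst hbb
    simp only [if_pos rfl, if_true]
    rw [Matrix.smul_apply, Matrix.one_apply_eq, smul_eq_mul, mul_one]
    rw [← Finset.sum_div]
    congr 1
    refine Finset.sum_congr rfl fun k _ => ?_
    simp only [Matrix.mulVec, dotProduct, Finset.sum_mul]
    refine Finset.sum_congr rfl fun i _ => Finset.sum_congr rfl fun i' _ => ?_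
    ring
  · simp only [if_neg hbb, Finset.sum_const_zero]
    rw [Matrix.smul_apply, Matrix.one_apply_ne hbb, smul_eq_mul, mul_zero]

lemma mapSingle_one_one {g ℓ' : ℕ} :
    mapSingle (g := g) (1 : FreeMonoid (Fin g)) (1 : Matrix (Fin ℓ') (Fin ℓ') ℝ) = 1 := by
  rw [mapSingle_apply]
  exact Matrix.map_one _ (MonoidAlgebra.single_zero 1) (MonoidAlgebra.one_def).symm

lemma part1 {g ℓ ℓ' : ℕ} (A : Fin g → Matrix (Fin ℓ) (Fin ℓ) ℝ) (hℓ' : 0 < ℓ') :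
    (∃ (m : ℕ) (W : Fin m → Matrix (Fin ℓ) (Fin ℓ') ℝ),
        (1 : MatPoly g (Fin ℓ') (Fin ℓ')) =
          ∑ k, (constM (W k)ᵀ * MatPoly.pencil A : MatPoly g (Fin ℓ') (Fin ℓ)) * constM (W k))
      ↔ (∃ (m : ℕ) (h : Fin m → Fin ℓ → ℝ), 0 < m ∧ (∀ k, h k ≠ 0) ∧
          ∀ j, (∑ k, (A j).mulVec (h k) ⬝ᵥ h k) = 0) := by
  constructor
  · rintro ⟨m, W, hW⟩
    rw [sum_conj_pencil] at hW
    obtain ⟨hS0, hSj⟩ := pencil_extract _ _ hW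
    set cols : Fin m × Fin ℓ' → Fin ℓ → ℝ := fun p i => W p.1 i p.2 with hcols
    have hne : ∃ p, cols p ≠ 0 := by
      by_contra hc
      push_neg at hc
      have hWz : ∀ k, W k = 0 := by
        intro k
        refine Matrix.ext fun i b => ?_
        have := congrFun (hc (k, b)) i
        simpa [hcols] using this
      have : (∑ k, (W k)ᵀ * W k) = 0 := by
        refine Finset.sum_eq_zero fun k _ => ?_
        rw [hWz k]
        simp
      rw [this] at hS0
      have := congrFun (congrFun hS0 ⟨0, hℓ'⟩) ⟨0, hℓ'⟩
      simp at this
    obtain ⟨m', h', hm', hne', hsums⟩ := filter_nonzero cols hne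
    refine ⟨m', h', hm', hne', fun j => ?_⟩
    rw [hsums (A j)]
    have : ∀ p : Fin m × Fin ℓ', (A j).mulVec (cols p) ⬝ᵥ cols p
        = ((W p.1)ᵀ * A j * W p.1) p.2 p.2 := fun p => (conj_diag _ _ _).symm
    rw [Finset.sum_congr rfl fun p _ => this p, Fintype.sum_prod_type]
    rw [Finset.sum_comm]
    have : ∀ b : Fin ℓ', (∑ k, ((W k)ᵀ * A j * W k) b b)
        = (0 : Matrix (Fin ℓ') (Fin ℓ') ℝ) b b := by
      intro b
      rw [← hSj j, Matrix.sum_apply]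
    rw [Finset.sum_congr rfl fun b _ => this b]
    simp
  · rintro ⟨m, h, hm, hne, hsum⟩
    set t : ℝ := ∑ k, h k ⬝ᵥ h k with hts
    have ht : 0 < t := by
      refine Finset.sum_pos (fun k _ => ?_) (by simpa using Finset.univ_nonempty_iff.2 ⟨⟨0, hm⟩⟩)
      have h1 : 0 ≤ h k ⬝ᵥ h k := Finset.sum_nonneg fun i _ => mul_self_nonneg _
      have h2 : h k ⬝ᵥ h k ≠ 0 := fun hc => hne k (dotProduct_self_eq_zero.mp hc)
      exact lt_of_le_of_ne h1 (Ne.symm h2)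
    set s : ℝ := Real.sqrt t with hss
    have hs : s * s = t := Real.mul_self_sqrt ht.le
    set Wp : Fin m × Fin ℓ' → Matrix (Fin ℓ) (Fin ℓ') ℝ :=
      fun p => Matrix.of fun i b => if b = p.2 then h p.1 i / s else 0 with hWp
    refine ⟨m * ℓ', fun k => Wp (finProdFinEquiv.symm k), ?_⟩
    rw [sum_conj_pencil]
    have hsum_eq : ∀ M : Matrix (Fin ℓ) (Fin ℓ) ℝ,
        (∑ k : Fin (m * ℓ'), (Wp (finProdFinEquiv.symm k))ᵀ * M * Wp (finProdFinEquiv.symm k))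
          = ((∑ k, M.mulVec (h k) ⬝ᵥ h k) / t) • (1 : Matrix (Fin ℓ') (Fin ℓ') ℝ) := by
      intro M
      rw [← hs, ← conj_rank_one h s M]
      exact (Fintype.sum_equiv finProdFinEquiv
        (fun p => (Wp p)ᵀ * M * Wp p)
        (fun k => (Wp (finProdFinEquiv.symm k))ᵀ * M * Wp (finProdFinEquiv.symm k))
        (fun p => by simp only [Equiv.symm_apply_apply])).symm
    have hS0 : (∑ k : Fin (m * ℓ'), (Wp (finProdFinEquiv.symm k))ᵀ * Wp (finProdFinEquiv.symm k))
        = (1 : Matrix (Fin ℓ') (Fin ℓ') ℝ) := by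
      have : ∀ k : Fin (m * ℓ'), (Wp (finProdFinEquiv.symm k))ᵀ * Wp (finProdFinEquiv.symm k)
          = (Wp (finProdFinEquiv.symm k))ᵀ * (1 : Matrix (Fin ℓ) (Fin ℓ) ℝ) * Wp (finProdFinEquiv.symm k) := by
        intro k; rw [Matrix.mul_one]
      rw [Finset.sum_congr rfl fun k _ => this k, hsum_eq]
      have : (∑ k, (1 : Matrix (Fin ℓ) (Fin ℓ) ℝ).mulVec (h k) ⬝ᵥ h k) = t := by
        rw [hts]
        exact Finset.sum_congr rfl fun k _ => by rw [Matrix.one_mulVec]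
      rw [this, div_self ht.ne', one_smul]
    have hSj : ∀ j, (∑ k : Fin (m * ℓ'),
        (Wp (finProdFinEquiv.symm k))ᵀ * A j * Wp (finProdFinEquiv.symm k)) = 0 := by
      intro j
      rw [hsum_eq (A j), hsum j, zero_div, zero_smul]
    rw [hS0, Finset.sum_congr rfl fun j (_ : j ∈ Finset.univ) => by rw [hSj j]]
    simp [mapSingle_one_one]

/-- the quadratic form as a linear map in the matrix -/
def quadL {ℓ : ℕ} (v : Fin ℓ → ℝ) : Matrix (Fin ℓ) (Fin ℓ) ℝ →ₗ[ℝ] ℝ where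
  toFun M := M.mulVec v ⬝ᵥ v
  map_add' M N := by rw [Matrix.add_mulVec, add_dotProduct]
  map_smul' c M := by rw [Matrix.smul_mulVec, smul_dotProduct, smul_eq_mul, RingHom.id_apply, smul_eq_mul]

lemma quad_expand {ℓ : ℕ} (M : Matrix (Fin ℓ) (Fin ℓ) ℝ) (v : Fin ℓ → ℝ) :
    M.mulVec v ⬝ᵥ v = ∑ i, ∑ i', M i i' * v i' * v i := by
  simp only [Matrix.mulVec, dotProduct, Finset.sum_mul]

lemma quad_smul {ℓ : ℕ} (M : Matrix (Fin ℓ) (Fin ℓ) ℝ) (v : Fin ℓ → ℝ) (a : ℝ) :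
    M.mulVec (a • v) ⬝ᵥ (a • v) = a * a * (M.mulVec v ⬝ᵥ v) := by
  rw [Matrix.mulVec_smul, smul_dotProduct, dotProduct_smul]
  simp [smul_eq_mul]; ring

lemma part2_forward {g ℓ : ℕ} (A : Fin g → Matrix (Fin ℓ) (Fin ℓ) ℝ)
    (hfam : ∃ (m : ℕ) (h : Fin m → Fin ℓ → ℝ), 0 < m ∧ (∀ k, h k ≠ 0) ∧
          ∀ j, (∑ k, (A j).mulVec (h k) ⬝ᵥ h k) = 0) :
    ¬ ∃ c : Fin g → ℝ, (∑ j, c j • A j).PosDef := by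
  rintro ⟨c, hc⟩
  obtain ⟨m, h, hm, hne, hsum⟩ := hfam
  have key : (∑ k, (∑ j, c j • A j).mulVec (h k) ⬝ᵥ h k) = 0 := by
    have e1 : ∀ k, (∑ j, c j • A j).mulVec (h k) ⬝ᵥ h k
        = ∑ j, c j * ((A j).mulVec (h k) ⬝ᵥ h k) := by
      intro k
      have h0 := map_sum (quadL (h k)) (fun j => c j • A j) Finset.univ
      simp only [_root_.map_smul, smul_eq_mul] at h0
      exact h0
    rw [Finset.sum_congr rfl fun k _ => e1 k, Finset.sum_comm]
    refine Finset.sum_eq_zero fun j _ => ?_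
    rw [← Finset.mul_sum, hsum j, mul_zero]
  have pos : 0 < (∑ k, (∑ j, c j • A j).mulVec (h k) ⬝ᵥ h k) := by
    refine Finset.sum_pos (fun k _ => ?_) (Finset.univ_nonempty_iff.2 ⟨⟨0, hm⟩⟩)
    have := hc.dotProduct_mulVec_pos (hne k)
    simpa [dotProduct_comm] using this
  rw [key] at pos
  exact lt_irrefl 0 pos

lemma bohnenblust {g ℓ : ℕ} (A : Fin g → Matrix (Fin ℓ) (Fin ℓ) ℝ)
    (hA : ∀ j, (A j).IsSymm)
    (hno : ¬ ∃ c : Fin g → ℝ, (∑ j, c j • A j).PosDef) :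
    ∃ (m : ℕ) (h : Fin m → Fin ℓ → ℝ), 0 < m ∧ (∀ k, h k ≠ 0) ∧
      ∀ j, (∑ k, (A j).mulVec (h k) ⬝ᵥ h k) = 0 := by
  classical
  set sO : Set (Matrix (Fin ℓ) (Fin ℓ) ℝ) := {M | ∀ v, v ≠ 0 → 0 < M.mulVec v ⬝ᵥ v} with hsO
  set tS : Set (Matrix (Fin ℓ) (Fin ℓ) ℝ) := Set.range (fun c : Fin g → ℝ => ∑ j, c j • A j) with htS
  -- convexity of sO
  have hconv_s : Convex ℝ sO := by
    intro x hx y hy a b ha hb hab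
    intro v hv
    have hq : (a • x + b • y).mulVec v ⬝ᵥ v
        = a * (x.mulVec v ⬝ᵥ v) + b * (y.mulVec v ⬝ᵥ v) := by
      rw [Matrix.add_mulVec, add_dotProduct, Matrix.smul_mulVec,
        Matrix.smul_mulVec, smul_dotProduct, smul_dotProduct, smul_eq_mul, smul_eq_mul]
    rw [hq]
    rcases lt_or_eq_of_le ha with ha' | ha'
    · exact add_pos_of_pos_of_nonneg (mul_pos ha' (hx v hv)) (mul_nonneg hb (hy v hv).le)
    · have hb1 : b = 1 := by linarith
      rw [← ha', hb1]; simpa using hy v hv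
  -- openness of sO
  have hopen : IsOpen sO := by
    rw [isOpen_iff_forall_mem_open]
    intro M hM
    have hF : Continuous (fun p : Matrix (Fin ℓ) (Fin ℓ) ℝ × (Fin ℓ → ℝ) =>
        p.1.mulVec p.2 ⬝ᵥ p.2) := by
      have : (fun p : Matrix (Fin ℓ) (Fin ℓ) ℝ × (Fin ℓ → ℝ) => p.1.mulVec p.2 ⬝ᵥ p.2)
          = fun p => ∑ i, (∑ i', p.1 i i' * p.2 i') * p.2 i := rfl
      rw [this]
      refine continuous_finset_sum _ fun i _ => Continuous.mul ?_ ((continuous_apply i).comp continuous_snd)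
      refine continuous_finset_sum _ fun i' _ => Continuous.mul ?_ ((continuous_apply i').comp continuous_snd)
      exact (continuous_apply i').comp ((continuous_apply i).comp continuous_fst)
    have hU : IsOpen {p : Matrix (Fin ℓ) (Fin ℓ) ℝ × (Fin ℓ → ℝ) | 0 < p.1.mulVec p.2 ⬝ᵥ p.2} :=
      isOpen_lt continuous_const hF
    have hsub : ({M} : Set (Matrix (Fin ℓ) (Fin ℓ) ℝ)) ×ˢ (Metric.sphere (0 : Fin ℓ → ℝ) 1)
        ⊆ {p | 0 < p.1.mulVec p.2 ⬝ᵥ p.2} := by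
      rintro ⟨N, v⟩ ⟨hN, hvs⟩
      have hN' : N = M := hN
      have hv0 : v ≠ 0 := by
        intro hc
        rw [Metric.mem_sphere, hc] at hvs
        simp at hvs
      rw [Set.mem_setOf_eq, hN']
      exact hM v hv0
    obtain ⟨V, Wo, hVopen, _, hMV, hsphW, hVW⟩ :=
      generalized_tube_lemma isCompact_singleton (isCompact_sphere (0 : Fin ℓ → ℝ) 1) hU hsub
    refine ⟨V, ?_, hVopen, hMV (Set.mem_singleton M)⟩
    intro N hN
    intro v hv
    have hvnorm : ‖v‖ ≠ 0 := norm_ne_zero_iff.2 hv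
    set u : Fin ℓ → ℝ := ‖v‖⁻¹ • v with hu
    have husph : u ∈ Metric.sphere (0 : Fin ℓ → ℝ) 1 := by
      rw [Metric.mem_sphere, dist_zero_right, hu, norm_smul]
      simp [abs_of_nonneg (inv_nonneg.2 (norm_nonneg v)), inv_mul_cancel₀ hvnorm]
    have hmem : (N, u) ∈ {p : Matrix (Fin ℓ) (Fin ℓ) ℝ × (Fin ℓ → ℝ) | 0 < p.1.mulVec p.2 ⬝ᵥ p.2} :=
      hVW ⟨hN, hsphW husph⟩
    have hqu : 0 < N.mulVec u ⬝ᵥ u := hmem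
    rw [hu, quad_smul] at hqu
    have h2 : 0 < ‖v‖⁻¹ * ‖v‖⁻¹ := by positivity
    nlinarith [hqu, h2]
  -- convexity of tS
  have hconv_t : Convex ℝ tS := by
    rintro x ⟨c, rfl⟩ y ⟨d, rfl⟩ a b _ _ _
    refine ⟨fun j => a * c j + b * d j, ?_⟩
    simp only [add_smul, mul_smul, Finset.sum_add_distrib, Finset.smul_sum]
  -- disjointness
  have hdisj : Disjoint sO tS := by
    rw [Set.disjoint_left]
    rintro M hMs ⟨c, rfl⟩
    refine hno ⟨c, Matrix.PosDef.of_dotProduct_mulVec_pos ?_ ?_⟩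
    · show (∑ j, c j • A j).IsHermitian
      have : (∑ j, c j • A j).IsSymm := by
        rw [Matrix.IsSymm, Matrix.transpose_sum]
        exact Finset.sum_congr rfl fun j _ => by rw [Matrix.transpose_smul, hA j]
      exact this
    · intro x hx
      have := hMs x hx
      simpa [dotProduct_comm] using this
  obtain ⟨f, u, hfs, hft⟩ := geometric_hahn_banach_open hconv_s hopen hconv_t hdisj
  have ht0 : u ≤ 0 := by
    have h0t : (0 : Matrix (Fin ℓ) (Fin ℓ) ℝ) ∈ tS := ⟨0, by simp⟩
    simpa using hft 0 h0t
  have hf_t_zero : ∀ c : Fin g → ℝ, f (∑ j, c j • A j) = 0 := by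
    intro c
    by_contra hfc
    set b : Matrix (Fin ℓ) (Fin ℓ) ℝ := ∑ j, c j • A j with hb
    set r : ℝ := (u - 1) / f b with hr
    have hrb : r • b ∈ tS := by
      refine ⟨fun j => r * c j, ?_⟩
      rw [hb, Finset.smul_sum]
      exact Finset.sum_congr rfl fun j _ => by rw [mul_smul]
    have := hft _ hrb
    rw [_root_.map_smul, smul_eq_mul, hr, div_mul_cancel₀ _ hfc] at this
    linarith
  have h1s : (1 : Matrix (Fin ℓ) (Fin ℓ) ℝ) ∈ sO := by
    intro v hv
    rw [Matrix.one_mulVec]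
    have h1 : 0 ≤ v ⬝ᵥ v := Finset.sum_nonneg fun i _ => mul_self_nonneg _
    exact lt_of_le_of_ne h1 (Ne.symm fun hc => hv (dotProduct_self_eq_zero.mp hc))
  have hf1 : f 1 < 0 := lt_of_lt_of_le (hfs 1 h1s) ht0
  have hPSD : ∀ M : Matrix (Fin ℓ) (Fin ℓ) ℝ, (∀ v, 0 ≤ M.mulVec v ⬝ᵥ v) → f M ≤ 0 := by
    intro M hMp
    have hε : ∀ ε : ℝ, 0 < ε → f M + ε * f 1 < 0 := by
      intro ε hε
      have hMε : (M + ε • 1) ∈ sO := by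
        intro v hv
        have : (M + ε • 1).mulVec v ⬝ᵥ v = M.mulVec v ⬝ᵥ v + ε * (v ⬝ᵥ v) := by
          rw [Matrix.add_mulVec, add_dotProduct, Matrix.smul_mulVec,
            smul_dotProduct, smul_eq_mul, Matrix.one_mulVec]
        rw [this]
        have h1 : 0 < v ⬝ᵥ v := by
          have h2 : 0 ≤ v ⬝ᵥ v := Finset.sum_nonneg fun i _ => mul_self_nonneg _
          exact lt_of_le_of_ne h2 (Ne.symm fun hc => hv (dotProduct_self_eq_zero.mp hc))
        have := hMp v
        nlinarith
      have := hfs _ hMε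
      rw [map_add, _root_.map_smul, smul_eq_mul] at this
      linarith
    have htend : Filter.Tendsto (fun ε : ℝ => f M + ε * f 1)
        (nhdsWithin 0 (Set.Ioi 0)) (nhds (f M + 0 * f 1)) := by
      refine Filter.Tendsto.mono_left ?_ nhdsWithin_le_nhds
      exact Continuous.tendsto (by continuity) 0
    have := le_of_tendsto htend (eventually_nhdsWithin_of_forall (fun x hx => (hε x hx).le))
    simpa using this
  -- representing matrix
  set G : Matrix (Fin ℓ) (Fin ℓ) ℝ := Matrix.of fun i j => f (Matrix.single i j 1) with hG
  have hfG : ∀ M : Matrix (Fin ℓ) (Fin ℓ) ℝ, f M = ∑ i, ∑ j, M i j * G i j := by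
    intro M
    conv_lhs => rw [matrix_eq_sum_single M]
    rw [map_sum]
    refine Finset.sum_congr rfl fun i _ => ?_
    rw [map_sum]
    refine Finset.sum_congr rfl fun j _ => ?_
    have : Matrix.single i j (M i j) = (M i j) • Matrix.single i j 1 := by
      rw [Matrix.smul_single, smul_eq_mul, mul_one]
    rw [this, _root_.map_smul, smul_eq_mul, hG]
    rfl
  set H : Matrix (Fin ℓ) (Fin ℓ) ℝ := (-(1/2) : ℝ) • (G + Gᵀ) with hH
  have hHe : ∀ i i', H i i' = -(1/2) * (G i i' + G i' i) := by
    intro i i'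
    rw [hH]
    simp [Matrix.transpose_apply]
  have hquadH : ∀ v : Fin ℓ → ℝ, H.mulVec v ⬝ᵥ v = - f (vecMulVec v v) := by
    intro v
    rw [quad_expand, hfG]
    have e1 : ∀ i i', H i i' * v i' * v i
        = -(1/2) * (G i i' * v i' * v i + G i' i * v i' * v i) := by
      intro i i'; rw [hHe]; ring
    rw [Finset.sum_congr rfl fun i _ => Finset.sum_congr rfl fun i' _ => e1 i i']
    have hS1 : (∑ i, ∑ i', G i i' * v i' * v i) = ∑ i, ∑ j, (vecMulVec v v) i j * G i j :=
      Finset.sum_congr rfl fun i _ => Finset.sum_congr rfl fun j _ => by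
        rw [Matrix.vecMulVec_apply]; ring
    have hS2 : (∑ i, ∑ i', G i' i * v i' * v i) = ∑ i, ∑ j, (vecMulVec v v) i j * G i j := by
      rw [Finset.sum_comm]
      exact Finset.sum_congr rfl fun i _ => Finset.sum_congr rfl fun j _ => by
        rw [Matrix.vecMulVec_apply]; ring
    have expand : (∑ i, ∑ i', -(1/2 : ℝ) * (G i i' * v i' * v i + G i' i * v i' * v i))
        = -(1/2) * (∑ i, ∑ i', G i i' * v i' * v i) + -(1/2) * (∑ i, ∑ i', G i' i * v i' * v i) := by
      rw [Finset.mul_sum, Finset.mul_sum, ← Finset.sum_add_distrib]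
      refine Finset.sum_congr rfl fun i _ => ?_
      rw [Finset.mul_sum, Finset.mul_sum, ← Finset.sum_add_distrib]
      refine Finset.sum_congr rfl fun i' _ => ?_
      ring
    rw [expand, hS1, hS2]
    ring
  
  have hHpsd : H.PosSemidef := by
    refine Matrix.PosSemidef.of_dotProduct_mulVec_nonneg ?_ ?_
    · show Hᴴ = H
      have : Hᵀ = H := by
        refine Matrix.ext fun i i' => ?_
        rw [Matrix.transpose_apply, hHe, hHe]; ring
      exact this
    · intro x
      have h1 : star x ⬝ᵥ H *ᵥ x = H.mulVec x ⬝ᵥ x := by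
        rw [star_trivial, dotProduct_comm]
      rw [h1, hquadH]
      have hfv : f (vecMulVec x x) ≤ 0 := by
        refine hPSD _ fun v => ?_
        rw [quad_expand]
        have e3 : (∑ i, ∑ j, (vecMulVec x x) i j * v j * v i) = (x ⬝ᵥ v) * (x ⬝ᵥ v) := by
          rw [dotProduct, Finset.sum_mul_sum]
          refine Finset.sum_congr rfl fun i _ => Finset.sum_congr rfl fun j _ => ?_
          rw [Matrix.vecMulVec_apply]; ring
        rw [e3]
        exact mul_self_nonneg _
      linarith
  have hf1G : f 1 = ∑ i, G i i := by
    rw [hfG 1]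
    refine Finset.sum_congr rfl fun i _ => ?_
    rw [Finset.sum_eq_single i]
    · rw [Matrix.one_apply_eq, one_mul]
    · intro j _ hj; rw [Matrix.one_apply_ne (Ne.symm hj), zero_mul]
    · intro hi; exact absurd (Finset.mem_univ i) hi
  have htr : 0 < ∑ i, H i i := by
    have e4 : (∑ i, H i i) = - f 1 := by
      rw [hf1G, ← Finset.sum_neg_distrib]
      refine Finset.sum_congr rfl fun i _ => ?_
      rw [hHe]; ring
    rw [e4]; linarith
  have horth : ∀ j, (∑ i, ∑ i', A j i i' * H i i') = 0 := by
    intro j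
    have hfAj : f (A j) = 0 := by
      have e5 : A j = ∑ j', (Pi.single j 1 : Fin g → ℝ) j' • A j' := by
        rw [Finset.sum_eq_single j]
        · simp
        · intro j' _ hj'; rw [Pi.single_eq_of_ne hj', zero_smul]
        · intro hj; exact absurd (Finset.mem_univ j) hj
      rw [e5]
      exact hf_t_zero _
    have e2 : (∑ i, ∑ i', A j i i' * G i' i) = ∑ i, ∑ i', A j i i' * G i i' := by
      rw [Finset.sum_comm]
      refine Finset.sum_congr rfl fun i _ => Finset.sum_congr rfl fun i' _ => ?_
      have hsymm : A j i' i = A j i i' := by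
        have := congrFun (congrFun (hA j) i) i'
        rw [Matrix.transpose_apply] at this
        exact this
      rw [hsymm]
    have expand2 : (∑ i, ∑ i', A j i i' * H i i')
        = -(1/2) * (∑ i, ∑ i', A j i i' * G i i') + -(1/2) * (∑ i, ∑ i', A j i i' * G i' i) := by
      rw [Finset.mul_sum, Finset.mul_sum, ← Finset.sum_add_distrib]
      refine Finset.sum_congr rfl fun i _ => ?_
      rw [Finset.mul_sum, Finset.mul_sum, ← Finset.sum_add_distrib]
      refine Finset.sum_congr rfl fun i' _ => ?_
      rw [hHe]; ring
    rw [expand2, e2, ← hfG (A j), hfAj]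
    ring
  obtain ⟨B, hB⟩ : ∃ B : Matrix (Fin ℓ) (Fin ℓ) ℝ, H = Bᴴ * B := by
    open MatrixOrder in
    obtain ⟨B, hB⟩ := CStarAlgebra.nonneg_iff_eq_star_mul_self.mp hHpsd.nonneg
    exact ⟨B, hB⟩
  set rws : Fin ℓ → Fin ℓ → ℝ := fun k i => B k i with hrws
  have hHrow : ∀ i i', H i i' = ∑ k, rws k i * rws k i' := by
    intro i i'
    rw [hB, Matrix.mul_apply]
    refine Finset.sum_congr rfl fun k _ => ?_
    rw [Matrix.conjTranspose_apply, star_trivial]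
  have hex : ∃ k, rws k ≠ 0 := by
    by_contra hc
    push_neg at hc
    have hz : ∀ i i', H i i' = 0 := by
      intro i i'
      rw [hHrow]
      refine Finset.sum_eq_zero fun k _ => ?_
      rw [hc k]
      simp
    have h0 : (∑ i, H i i) = 0 := Finset.sum_eq_zero fun i _ => hz i i
    rw [h0] at htr
    exact lt_irrefl 0 htr
  obtain ⟨m, h, hm, hne, hsums⟩ := filter_nonzero rws hex
  refine ⟨m, h, hm, hne, fun j => ?_⟩
  rw [hsums (A j)]
  have e6 : (∑ k, (A j).mulVec (rws k) ⬝ᵥ rws k) = ∑ i, ∑ i', A j i i' * H i' i := by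
    rw [Finset.sum_congr rfl fun k (_ : k ∈ Finset.univ) => quad_expand (A j) (rws k)]
    rw [Finset.sum_comm]
    refine Finset.sum_congr rfl fun i _ => ?_
    rw [Finset.sum_comm]
    refine Finset.sum_congr rfl fun i' _ => ?_
    rw [hHrow i' i, Finset.mul_sum]
    refine Finset.sum_congr rfl fun k _ => by ring
  rw [e6]
  have hsymH : ∀ i i' : Fin ℓ, H i' i = H i i' := fun i i' => by rw [hHe, hHe]; ring
  rw [Finset.sum_congr rfl fun i (_ : i ∈ Finset.univ) =>
    Finset.sum_congr rfl fun i' (_ : i' ∈ Finset.univ) => by rw [hsymH i i']]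
  exact horth j

end AuxStmt15

/-- for a monic linear pencil `L = I - Σ A_j x_j`, the identity
`I = Σ_j W_j* L(x) W_j` is achievable iff there exist (finitely many) nonzero
vectors `h_k` with `Σ_k ⟨A_j h_k, h_k⟩ = 0` for each `j`, and this happens iff
`span{A_1,…,A_g}` contains no positive definite matrix (Bohnenblust). -/
theorem stmt15 {g ℓ : ℕ} (A : Fin g → Matrix (Fin ℓ) (Fin ℓ) ℝ)
    (hA : ∀ j, (A j).IsSymm) (ℓ' : ℕ) (hℓ' : 0 < ℓ') :
    ((∃ (m : ℕ) (W : Fin m → Matrix (Fin ℓ) (Fin ℓ') ℝ),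
        (1 : MatPoly g (Fin ℓ') (Fin ℓ')) =
          ∑ k, (constM (W k)ᵀ * MatPoly.pencil A : MatPoly g (Fin ℓ') (Fin ℓ)) * constM (W k))
      ↔ (∃ (m : ℕ) (h : Fin m → Fin ℓ → ℝ), 0 < m ∧ (∀ k, h k ≠ 0) ∧
          ∀ j, (∑ k, (A j).mulVec (h k) ⬝ᵥ h k) = 0))
    ∧ ((∃ (m : ℕ) (h : Fin m → Fin ℓ → ℝ), 0 < m ∧ (∀ k, h k ≠ 0) ∧
          ∀ j, (∑ k, (A j).mulVec (h k) ⬝ᵥ h k) = 0)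
      ↔ ¬ ∃ c : Fin g → ℝ, (∑ j, c j • A j).PosDef) := by
  exact ⟨part1 A hℓ', ⟨part2_forward A, fun hno => bohnenblust A hA hno⟩⟩
end
end

section
/- For q = [[x, 1],[1, 0]] ∈ ℝ^{2×2}⟨x⟩ (one variable), the nc semialgebraic set 𝔓_q is empty, −1 is not in M^1_{0,0}(q), but −1 = (1/2) u* q u for u = [1, −1 − x/2]*, so −1 ∈ M̊^1_1(q). -/
open scoped Matrix BigOperators
noncomputable section

namespace Aux

lemma wordStar_eq (w : FreeMonoid (Fin 1)) : NCPoly.wordStar w = w := by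
  unfold NCPoly.wordStar
  have h : (FreeMonoid.toList w).reverse = FreeMonoid.toList w := by
    have h2 : FreeMonoid.toList w = List.replicate (FreeMonoid.toList w).length 0 :=
      List.eq_replicate_length.mpr (fun b _ => Subsingleton.elim b 0)
    conv_lhs => rw [h2]
    rw [List.reverse_replicate, ← h2]
  rw [h, FreeMonoid.ofList_toList]

lemma adj_eq (p : NCPoly 1) : NCPoly.adj p = p := by
  unfold NCPoly.adj
  have : NCPoly.wordStar (g := 1) = id := funext wordStar_eq
  rw [this, Finsupp.mapDomain_id]

lemma adj_smul {g : ℕ} (c : ℝ) (p : NCPoly g) :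
    NCPoly.adj (c • p) = c • NCPoly.adj p :=
  congrArg MonoidAlgebra.ofCoeff (Finsupp.mapDomain_smul c p.coeff)

lemma matadj_smul {g : ℕ} {I J : Type*} (c : ℝ) (P : MatPoly g I J) :
    MatPoly.adj (c • P) = c • MatPoly.adj P := by
  funext i j
  simp [MatPoly.adj, Matrix.smul_apply, adj_smul]

lemma deg_le {g : ℕ} {p : NCPoly g} {d : ℕ}
    (h : ∀ w ∈ p.coeff.support, (FreeMonoid.toList w).length ≤ d) : NCPoly.deg p ≤ d :=
  Finset.sup_le h

lemma deg_smul_le {g : ℕ} (c : ℝ) (p : NCPoly g) : NCPoly.deg (c • p) ≤ NCPoly.deg p :=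
  Finset.sup_mono Finsupp.support_smul

lemma const_of_deg_le_zero {g : ℕ} {p : NCPoly g} (h : NCPoly.deg p ≤ 0) :
    p = MonoidAlgebra.single 1 (p.coeff 1) := by
  ext w
  by_cases hw : w = 1
  · subst hw; simp [MonoidAlgebra.coeff_single]
  · have hns : w ∉ p.coeff.support := by
      intro hmem
      have hle := Finset.le_sup (f := fun w : FreeMonoid (Fin g) => (FreeMonoid.toList w).length) hmem
      have : (FreeMonoid.toList w).length = 0 := Nat.le_zero.mp (hle.trans h)
      exact hw (by
        have := List.length_eq_zero_iff.mp this
        exact FreeMonoid.toList.injective (by simpa using this))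
    rw [Finsupp.notMem_support_iff.mp hns]
    simp [MonoidAlgebra.coeff_single, Finsupp.single_apply, Ne.symm hw]

/-- evaluation into ℝ -/
def phi (t : ℝ) : NCPoly 1 →ₐ[ℝ] ℝ :=
  MonoidAlgebra.lift ℝ ℝ (FreeMonoid (Fin 1)) (FreeMonoid.lift (fun _ => (t : ℝ)))

lemma phi_X (t : ℝ) : phi t (NCPoly.X 0) = t := by
  simp [phi, NCPoly.X, MonoidAlgebra.lift_single]

lemma phi_single (t c : ℝ) : phi t (MonoidAlgebra.single 1 c) = c := by
  simp [phi, MonoidAlgebra.lift_single]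

end Aux

namespace Aux
lemma eval_X {g n : ℕ} (X : Fin g → Matrix (Fin n) (Fin n) ℝ) (i : Fin g) :
    NCPoly.eval X (NCPoly.X i) = X i := by
  simp [NCPoly.eval, NCPoly.X, MonoidAlgebra.lift_single]

lemma eval_one {g n : ℕ} (X : Fin g → Matrix (Fin n) (Fin n) ℝ) :
    NCPoly.eval X (1 : NCPoly g) = 1 := by
  simp [NCPoly.eval]

lemma eval_zero {g n : ℕ} (X : Fin g → Matrix (Fin n) (Fin n) ℝ) :
    NCPoly.eval X (0 : NCPoly g) = 0 := by
  simp [NCPoly.eval]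
end Aux

open Aux

/-- for `q = [[x,1],[1,0]]` the set `𝔓_q` is empty, `-1` is not
in `M^1_{0,0}(q)`, but `-1 = ½ u* q u` for `u = [1, -1-x/2]*`, so
`-1 ∈ M̊^1_1(q)`. -/
theorem stmt16 :
    let x : NCPoly 1 := NCPoly.X 0
    let q : MatPoly 1 (Fin 2) (Fin 2) := !![x, 1; 1, 0]
    let u : MatPoly 1 (Fin 2) (Fin 1) := !![(1 : NCPoly 1); -1 - (1/2 : ℝ) • x]
    (∀ (n : ℕ), 0 < n → ∀ X : Fin 1 → Matrix (Fin n) (Fin n) ℝ,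
      ¬ MatPoly.InP q X) ∧
    ¬ MatPoly.InM 0 0 q (-1 : MatPoly 1 (Fin 1) (Fin 1)) ∧
    (-1 : MatPoly 1 (Fin 1) (Fin 1)) = (1/2 : ℝ) • (MatPoly.adj u * q * u) ∧
    (∃ (m : ℕ) (f : Fin m → MatPoly 1 (Fin 2) (Fin 1)),
      (∀ k, MatPoly.deg (f k) ≤ 1) ∧
      (-1 : MatPoly 1 (Fin 1) (Fin 1)) = ∑ k, MatPoly.adj (f k) * q * f k) := by
  intro x q u
  classical
  have part3 : (-1 : MatPoly 1 (Fin 1) (Fin 1)) = (1/2 : ℝ) • (MatPoly.adj u * q * u) := by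
    funext i j
    fin_cases i; fin_cases j
    simp [q, u, MatPoly.adj, adj_eq, Matrix.mul_apply, Fin.sum_univ_two, Fin.sum_univ_one,
      sub_mul, mul_sub, smul_mul_assoc, mul_smul_comm]
    module
  refine ⟨?_, ?_, part3, ?_⟩
  · -- part 1 : 𝔓_q is empty
    intro n hn X hP
    obtain ⟨-, hpsd⟩ := hP
    set i0 : Fin n := ⟨0, hn⟩
    set α : ℝ := (X 0) i0 i0 with hα
    set e : Fin 2 → Fin 2 × Fin n := ![((0 : Fin 2), i0), ((1 : Fin 2), i0)] with he
    have key : ∀ t : ℝ, 0 ≤ α + 2 * t := by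
      intro t
      have h := (hpsd.submatrix e).dotProduct_mulVec_nonneg ![1, t]
      have h00 : MatPoly.eval X q (e 0) (e 0) = α := by
        simp [he, MatPoly.eval, q, x, eval_X, hα]
      have h01 : MatPoly.eval X q (e 0) (e 1) = 1 := by
        simp [he, MatPoly.eval, q, x, eval_one, Matrix.one_apply_eq]
      have h10 : MatPoly.eval X q (e 1) (e 0) = 1 := by
        simp [he, MatPoly.eval, q, x, eval_one, Matrix.one_apply_eq]
      have h11 : MatPoly.eval X q (e 1) (e 1) = 0 := by
        simp [he, MatPoly.eval, q, x, eval_zero]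
      simp only [dotProduct, Matrix.mulVec, Fin.sum_univ_two, Matrix.submatrix_apply,
        Pi.star_apply, star_trivial, Matrix.cons_val_zero, Matrix.cons_val_one, Matrix.head_cons,
        dotProduct] at h
      rw [h00, h01, h10, h11] at h
      linarith
    have := key (-(α + 1) / 2)
    linarith
  · -- part 2 : -1 ∉ M^1_{0,0}(q)
    rintro ⟨σ, m, f, ⟨m', v, hvdeg, hσ⟩, hfdeg, heq⟩
    have hfc : ∀ (k : Fin m) (i : Fin 2), f k i 0 = MonoidAlgebra.single 1 ((f k i 0).coeff 1) := by
      intro k i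
      refine const_of_deg_le_zero ?_
      exact le_trans (Finset.le_sup (f := fun p : Fin 2 × Fin 1 => NCPoly.deg (f k p.1 p.2))
        (Finset.mem_univ (i, 0))) (hfdeg k)
    have hvc : ∀ (k : Fin m'), v k 0 = MonoidAlgebra.single 1 ((v k 0).coeff 1) :=
      fun k => const_of_deg_le_zero (hvdeg k 0)
    set a : Fin m → ℝ := fun k => (f k 0 0).coeff 1 with ha
    set b : Fin m → ℝ := fun k => (f k 1 0).coeff 1 with hb
    set c : Fin m' → ℝ := fun k => (v k 0).coeff 1 with hc
    have hpf : ∀ (t : ℝ) (k : Fin m) (i : Fin 2), phi t (f k i 0) = (f k i 0).coeff 1 := by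
      intro t k i
      conv_lhs => rw [hfc k i]
      exact phi_single t _
    have hpv : ∀ (t : ℝ) (k : Fin m'), phi t (v k 0) = c k := by
      intro t k
      conv_lhs => rw [hvc k]
      exact phi_single t _
    have h00 := congrFun (congrFun heq 0) 0
    rw [Matrix.add_apply] at h00
    have key : ∀ t : ℝ, (-1 : ℝ) = (∑ k, c k * c k) +
        ∑ k, ((a k * t * a k) + (a k * b k + b k * a k)) := by
      intro t
      have h := congrArg (phi t) h00
      simp only [Matrix.neg_apply, Matrix.one_apply_eq, Matrix.add_apply, Matrix.sum_apply,
        Matrix.mul_apply, Fin.sum_univ_two, Fin.sum_univ_one, MatPoly.adj, hσ,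
        Matrix.cons_val_zero, Matrix.cons_val_one, Matrix.head_cons, Matrix.cons_val',
        Matrix.empty_val', Matrix.cons_val_fin_one, Matrix.head_fin_const,
        map_neg, map_one, map_add, map_sum, map_mul, adj_eq, hpf, hpv, phi_X, x, q,
        Matrix.of_apply, mul_one, one_mul, mul_zero, zero_mul, add_zero, zero_add, map_zero] at h
      rw [h]
      congr 1
      refine Finset.sum_congr rfl fun k _ => ?_
      show ((a k * t + b k) * a k + a k * b k) = _
      ring
    have hS : ∀ t : ℝ, ∑ k, ((a k * t * a k) + (a k * b k + b k * a k))
        = t * (∑ k, a k * a k) + ∑ k, (a k * b k + b k * a k) := by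
      intro t
      rw [Finset.sum_add_distrib, Finset.mul_sum]
      congr 1
      exact Finset.sum_congr rfl fun k _ => by ring
    have h0 := key 0
    have h1 := key 1
    rw [hS] at h0 h1
    have hA : (∑ k, a k * a k) = 0 := by linarith
    have hak : ∀ k ∈ Finset.univ, a k * a k = 0 := by
      rw [← Finset.sum_eq_zero_iff_of_nonneg (fun k _ => mul_self_nonneg (a k))]
      exact hA
    have hB : ∑ k, (a k * b k + b k * a k) = 0 := by
      refine Finset.sum_eq_zero fun k _ => ?_
      have : a k = 0 := by
        have := hak k (Finset.mem_univ k)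
        nlinarith [this]
      rw [this]; ring
    have hC : 0 ≤ ∑ k, c k * c k := Finset.sum_nonneg fun k _ => mul_self_nonneg (c k)
    rw [hB] at h0
    simp at h0
    linarith
  · -- part 4 : -1 ∈ M̊^1_1(q)
    refine ⟨2, fun _ => (1/2 : ℝ) • u, ?_, ?_⟩
    · intro k
      apply Finset.sup_le
      rintro ⟨i, j⟩ -
      refine le_trans (deg_smul_le (1/2 : ℝ) (u i j)) ?_
      fin_cases i <;> fin_cases j
      · apply deg_le
        intro w hw
        have hw : w ∈ (MonoidAlgebra.single (1 : FreeMonoid (Fin 1)) (1:ℝ)).coeff.support := hw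
        have := Finsupp.support_single_subset hw
        simp only [Finset.mem_singleton] at this
        subst this
        simp [FreeMonoid.toList_one]
      · apply deg_le
        intro w hw
        have hw : w ∈ (-1 - (1/2 : ℝ) • x : NCPoly 1).coeff.support := hw
        rw [MonoidAlgebra.coeff_sub, MonoidAlgebra.coeff_neg, MonoidAlgebra.coeff_smul] at hw
        have hsub := Finsupp.support_sub hw
        rw [Finset.mem_union] at hsub
        rcases hsub with h | h
        · rw [Finsupp.support_neg] at h
          rw [show (1 : NCPoly 1) = MonoidAlgebra.single 1 1 from rfl] at h
          have := Finsupp.support_single_subset h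
          simp only [Finset.mem_singleton] at this
          subst this
          simp [FreeMonoid.toList_one]
        · have h2 := Finsupp.support_smul h
          rw [show (x : NCPoly 1) = MonoidAlgebra.single (FreeMonoid.of 0) 1 from rfl] at h2
          have := Finsupp.support_single_subset h2
          simp only [Finset.mem_singleton] at this
          subst this
          simp [FreeMonoid.toList_of]
    · have hT : MatPoly.adj ((1/2 : ℝ) • u) * q * ((1/2 : ℝ) • u)
          = (1/4 : ℝ) • (MatPoly.adj u * q * u) := by
        simp only [matadj_smul, Matrix.smul_mul, Matrix.mul_smul, smul_smul]
        norm_num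
      rw [Fin.sum_univ_two, hT, ← add_smul]
      norm_num
      rw [part3]
end
end
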